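/- Let F be a finite field and G a finite abelian group. If the group ring FG is a principal ideal ring, then every nontrivial ideal of FG equals Ann(v) for some element v ∈ FG, i.e. every nontrivial ideal is a checkable code. -/

import Mathlib

theorem stmt_1 (F G : Type*) [Field F] [Fintype F] [CommGroup G] [Fintype G]
    (h : IsPrincipalIdealRing (MonoidAlgebra F G)) :
    ∀ I : Ideal (MonoidAlgebra F G), I ≠ ⊥ → I ≠ ⊤ →
      ∃ v : MonoidAlgebra F G, ∀ x : MonoidAlgebra F G, x ∈ I ↔ x * v = 0 := by
  intro I _ _
  set R := MonoidAlgebra F G with hR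
  obtain ⟨g, hg⟩ := (h.principal I)
  haveI : Module.Finite F R := Module.Finite.of_basis (MonoidAlgebra.basis G F : Module.Basis G F (MonoidAlgebra F G))
  let J : Ideal R := LinearMap.ker (LinearMap.mulRight R g)
  obtain ⟨v, hv⟩ := (h.principal J)
  have hvJ : v ∈ J := by rw [hv]; exact Ideal.mem_span_singleton_self v
  have hgv : g * v = 0 := by
    have : v * g = 0 := hvJ
    rw [mul_comm] at this; exact this
  let f : R →ₗ[F] R := LinearMap.mulRight F g
  let f' : R →ₗ[F] R := LinearMap.mulRight F v
  have hker : LinearMap.ker f = J.restrictScalars F := by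
    ext x
    simp [f, J, LinearMap.mem_ker]
  have hrange : LinearMap.range f' = J.restrictScalars F := by
    ext x
    simp only [LinearMap.mem_range, Submodule.restrictScalars_mem, hv,
      Submodule.mem_span_singleton]
    constructor
    · rintro ⟨a, rfl⟩; exact ⟨a, by simp [f', mul_comm]⟩
    · rintro ⟨c, rfl⟩; exact ⟨c, by simp [f', mul_comm]⟩
  have hle : LinearMap.range f ≤ LinearMap.ker f' := by
    rintro x ⟨a, rfl⟩
    simp only [LinearMap.mem_ker, f, f', LinearMap.mulRight_apply]
    rw [mul_assoc, hgv, mul_zero]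
  have h1 := LinearMap.finrank_range_add_finrank_ker f
  have h2 := LinearMap.finrank_range_add_finrank_ker f'
  have heq : Module.finrank F (LinearMap.range f') = Module.finrank F (LinearMap.ker f) := by
    rw [hrange, hker]
  have hdim : Module.finrank F (LinearMap.range f) = Module.finrank F (LinearMap.ker f') := by
    omega
  have hfin : LinearMap.range f = LinearMap.ker f' :=
    Submodule.eq_of_le_of_finrank_eq hle hdim
  refine ⟨v, fun x => ?_⟩
  have hxI : x ∈ I ↔ x ∈ LinearMap.range f := by
    rw [hg]
    simp only [Submodule.mem_span_singleton, LinearMap.mem_range]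
    constructor
    · rintro ⟨c, rfl⟩; exact ⟨c, by simp [f, mul_comm]⟩
    · rintro ⟨a, rfl⟩; exact ⟨a, by simp [f, mul_comm]⟩
  rw [hxI, hfin]
  simp [f', LinearMap.mem_ker]
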